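/- Let L be a complete lattice in which every element P ≠ ⊥ is contained in some quasipoint, and let f : Q(L) → ℝ be a bounded continuous function on the Stone spectrum of L. Define r_f(P) := sup{f(B) | B ∈ Q_P(L)} for P ∈ L ∖ {⊥}, and suppose r_f is completely increasing (r_f(⨆_k P_k) = sup_k r_f(P_k) for every nonempty family in L ∖ {⊥}). Then for every quasipoint B ∈ Q(L): f(B) = inf{r_f(P) | P ∈ B}; i.e. f coincides with the restriction to Q(L) of the observable function f_{r_f}(J) := inf_{P∈J} r_f(P). -/

import Mathlib

/-- A quasipoint (maximal filter base) in a complete lattice: a nonempty subset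
not containing `⊥`, downward directed, and maximal among such subsets. -/
def IsQuasipoint {L : Type*} [CompleteLattice L] (B : Set L) : Prop :=
  B.Nonempty ∧ ⊥ ∉ B ∧ (∀ a ∈ B, ∀ b ∈ B, ∃ c ∈ B, c ≤ a ⊓ b) ∧
  ∀ C : Set L, ⊥ ∉ C → (∀ a ∈ C, ∀ b ∈ C, ∃ c ∈ C, c ≤ a ⊓ b) → B ⊆ C → B = C

/-- The Stone spectrum of a complete lattice. -/
def StoneSpectrum (L : Type*) [CompleteLattice L] : Type _ :=
  {B : Set L // IsQuasipoint B}

/-- The basic sets `Q_P(L) = {B | P ∈ B}`. -/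
def QSet {L : Type*} [CompleteLattice L] (P : L) : Set (StoneSpectrum L) :=
  {B : StoneSpectrum L | P ∈ B.1}

/-- The topology on the Stone spectrum generated by the sets `Q_P(L)`. -/
instance {L : Type*} [CompleteLattice L] : TopologicalSpace (StoneSpectrum L) :=
  TopologicalSpace.generateFrom (Set.range (QSet (L := L)))

/-- The function `r_f(P) := sup {f(B) | B ∈ Q_P(L)}` induced by a function `f`
on the Stone spectrum. -/
noncomputable def rInduced {L : Type*} [CompleteLattice L]
    (f : StoneSpectrum L → ℝ) (P : L) : ℝ :=
  sSup (f '' QSet P)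

/-- Quasipoints are upward closed. -/
lemma IsQuasipoint.upClosed {L : Type*} [CompleteLattice L] {B : Set L}
    (h : IsQuasipoint B) {a b : L} (ha : a ∈ B) (hab : a ≤ b) : b ∈ B := by
  obtain ⟨hne, hbot, hdir, hmax⟩ := h
  have hkey : B = {x | ∃ c ∈ B, c ≤ x} := by
    apply hmax
    · rintro ⟨c, hc, hc'⟩
      exact hbot (le_bot_iff.mp hc' ▸ hc)
    · rintro x ⟨cx, hcx, hcx'⟩ y ⟨cy, hcy, hcy'⟩
      obtain ⟨d, hd, hd'⟩ := hdir cx hcx cy hcy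
      exact ⟨d, ⟨d, hd, le_rfl⟩, hd'.trans (inf_le_inf hcx' hcy')⟩
    · exact fun x hx => ⟨x, hx, le_rfl⟩
  rw [hkey]
  exact ⟨a, ha, hab⟩

/-- Let `L` be a complete lattice in which every nonzero element lies in some
quasipoint, and let `f` be a bounded continuous function on the Stone spectrum
such that `r_f` is completely increasing. Then for every quasipoint `B`,
`f(B) = inf {r_f(P) | P ∈ B}`, i.e. `f` coincides with the restriction to the
Stone spectrum of the observable function induced by `r_f`. -/
theorem stmt16 {L : Type*} [CompleteLattice L]
    (hqp : ∀ P : L, P ≠ ⊥ → ∃ B : Set L, IsQuasipoint B ∧ P ∈ B)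
    (f : StoneSpectrum L → ℝ)
    (hcont : Continuous f)
    (hbdd : ∃ C : ℝ, ∀ B : StoneSpectrum L, |f B| ≤ C)
    (hci : ∀ S : Set L, S.Nonempty → (∀ P ∈ S, P ≠ ⊥) →
      IsLUB (rInduced f '' S) (rInduced f (sSup S))) :
    ∀ B : StoneSpectrum L, IsGLB (rInduced f '' B.1) (f B) := by
  obtain ⟨C0, hC0⟩ := hbdd
  intro B
  have hbddA : ∀ P : L, BddAbove (f '' QSet P) := by
    intro P
    refine ⟨C0, ?_⟩
    rintro _ ⟨B', _, rfl⟩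
    exact (abs_le.mp (hC0 B')).2
  have hlb : ∀ P ∈ B.1, f B ≤ rInduced f P := fun P hP =>
    le_csSup (hbddA P) ⟨B, hP, rfl⟩
  constructor
  · rintro _ ⟨P, hP, rfl⟩
    exact hlb P hP
  · intro w hw
    by_contra hlt
    push_neg at hlt
    set m := (f B + w) / 2 with hm
    have h1 : f B < m := by simp only [hm]; linarith
    have h2 : m < w := by simp only [hm]; linarith
    have hU : IsOpen (f ⁻¹' Set.Iio m) := hcont.isOpen_preimage _ isOpen_Iio
    have hBU : B ∈ f ⁻¹' Set.Iio m := h1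
    have hbasis := TopologicalSpace.isTopologicalBasis_of_subbasis
      (s := Set.range (QSet (L := L))) rfl
    obtain ⟨v, hv, hBv, hvU⟩ := hbasis.exists_subset_of_mem_open hBU hU
    obtain ⟨F, ⟨hFfin, hFsub⟩, rfl⟩ := hv
    have key : ∀ F : Set (Set (StoneSpectrum L)), F.Finite →
        F ⊆ Set.range (QSet (L := L)) → B ∈ ⋂₀ F →
        ∃ P ∈ B.1, QSet P ⊆ ⋂₀ F := by
      intro F hF
      refine Set.Finite.induction_on (motive := fun F _ => F ⊆ Set.range (QSet (L := L)) → B ∈ ⋂₀ F →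
          ∃ P ∈ B.1, QSet P ⊆ ⋂₀ F) F hF ?_ ?_
      · intro _ _
        obtain ⟨P, hP⟩ := B.2.1
        exact ⟨P, hP, by simp⟩
      · rintro s F' hs hF' ih hsub hBmem
        obtain ⟨P0, rfl⟩ := hsub (Set.mem_insert _ _)
        have hP0 : P0 ∈ B.1 := hBmem _ (Set.mem_insert _ _)
        obtain ⟨P', hP', hP'sub⟩ := ih (fun x hx => hsub (Set.mem_insert_of_mem _ hx))
          (fun x hx => hBmem x (Set.mem_insert_of_mem _ hx))
        obtain ⟨c, hc, hc'⟩ := B.2.2.2.1 P0 hP0 P' hP'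
        refine ⟨c, hc, ?_⟩
        intro B' hB'
        have hcB' : c ∈ B'.1 := hB'
        have h0 : P0 ∈ B'.1 := B'.2.upClosed hcB' (hc'.trans inf_le_left)
        have h1' : P' ∈ B'.1 := B'.2.upClosed hcB' (hc'.trans inf_le_right)
        rw [Set.sInter_insert]
        exact ⟨h0, hP'sub h1'⟩
    obtain ⟨P, hP, hPsub⟩ := key F hFfin hFsub hBv
    have hmle : rInduced f P ≤ m := by
      have hne : (f '' QSet P).Nonempty := ⟨f B, B, hP, rfl⟩
      refine csSup_le hne ?_
      rintro _ ⟨B', hB', rfl⟩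
      exact le_of_lt (hvU (hPsub hB'))
    have := hw ⟨P, hP, rfl⟩
    linarith
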